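/- Let Γ be an m×m real symmetric positive definite matrix, H an m×n real matrix, B an n×N real matrix with N ≥ 1, y' ∈ ℝᵐ, and set C = N·BBᵀ. Then the matrix BᵀHᵀΓ⁻¹HB + (1/N)·I_N is invertible, the function J(b) = ½(y' − HBb)ᵀΓ⁻¹(y' − HBb) + (1/(2N))‖b‖² on ℝᴺ has a unique global minimizer b* = (BᵀHᵀΓ⁻¹HB + (1/N)·I_N)⁻¹BᵀHᵀΓ⁻¹y', and Bb* = CHᵀ(HCHᵀ + Γ)⁻¹y'. -/

import Mathlib

open Matrix

theorem stmt_16 {m n N : ℕ} (hN : 1 ≤ N)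
    (Γ : Matrix (Fin m) (Fin m) ℝ) (hΓ : Γ.PosDef)
    (H : Matrix (Fin m) (Fin n) ℝ)
    (B : Matrix (Fin n) (Fin N) ℝ)
    (y' : Fin m → ℝ)
    (C : Matrix (Fin n) (Fin n) ℝ) (hC : C = (N : ℝ) • (B * Bᵀ))
    (J : (Fin N → ℝ) → ℝ)
    (hJ : ∀ b, J b =
      (1 / 2) * ((y' - H.mulVec (B.mulVec b)) ⬝ᵥ
        Γ⁻¹.mulVec (y' - H.mulVec (B.mulVec b))) +
      (1 / (2 * (N : ℝ))) * (b ⬝ᵥ b))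
    (bstar : Fin N → ℝ)
    (hbstar : bstar =
      ((Bᵀ * Hᵀ * Γ⁻¹ * H * B + (1 / (N : ℝ)) • 1)⁻¹ *
        (Bᵀ * Hᵀ * Γ⁻¹)).mulVec y') :
    IsUnit (Bᵀ * Hᵀ * Γ⁻¹ * H * B + (1 / (N : ℝ)) • 1) ∧
    (∀ b : Fin N → ℝ, b ≠ bstar → J bstar < J b) ∧
    B.mulVec bstar = (C * Hᵀ * (H * C * Hᵀ + Γ)⁻¹).mulVec y' := by
  have hNpos : (0:ℝ) < N := by exact_mod_cast hN
  set A := Bᵀ * Hᵀ * Γ⁻¹ * H * B + (1 / (N : ℝ)) • 1 with hA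
  -- A is positive definite
  have hApd : A.PosDef := by
    have h1 : (Bᵀ * Hᵀ * Γ⁻¹ * H * B).PosSemidef := by
      have := hΓ.inv.posSemidef.conjTranspose_mul_mul_same (H * B)
      simpa [conjTranspose_eq_transpose_of_trivial, transpose_mul, Matrix.mul_assoc] using this
    have h2 : ((1 / (N : ℝ)) • (1 : Matrix (Fin N) (Fin N) ℝ)).PosDef := by
      rw [smul_one_eq_diagonal]
      exact .diagonal fun _ => by positivity
    exact Matrix.PosDef.posSemidef_add h1 h2
  have hAdet : IsUnit A.det := hApd.det_pos.ne'.isUnit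
  have hΓdet : IsUnit Γ.det := hΓ.det_pos.ne'.isUnit
  -- stationarity
  have hstat : A *ᵥ bstar = (Bᵀ * Hᵀ * Γ⁻¹) *ᵥ y' := by
    rw [hbstar, mulVec_mulVec, ← Matrix.mul_assoc, Matrix.mul_nonsing_inv _ hAdet,
      Matrix.one_mul]
  refine ⟨hApd.isUnit, ?_, ?_⟩
  · -- unique minimizer
    have hGiT : (Γ⁻¹)ᵀ = Γ⁻¹ := by
      have := hΓ.inv.isHermitian
      exact (by simpa [conjTranspose_eq_transpose_of_trivial] using this : Γ⁻¹.IsSymm)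
    have hsym : ∀ v w : Fin m → ℝ, v ⬝ᵥ Γ⁻¹ *ᵥ w = w ⬝ᵥ Γ⁻¹ *ᵥ v := by
      intro v w
      rw [dotProduct_mulVec, ← vecMul_transpose, hGiT, dotProduct_comm]
    have hpull : ∀ (d : Fin N → ℝ) (v : Fin m → ℝ),
        ((H * B) *ᵥ d) ⬝ᵥ Γ⁻¹ *ᵥ v = d ⬝ᵥ (Bᵀ * Hᵀ * Γ⁻¹) *ᵥ v := by
      intro d v
      rw [dotProduct_mulVec, ← vecMul_transpose, transpose_mul, vecMul_vecMul,
        ← dotProduct_mulVec]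
    have key : ∀ d : Fin N → ℝ, J (bstar + d) = J bstar + (1/2) * (d ⬝ᵥ A *ᵥ d) := by
      intro d
      set e := y' - (H * B) *ᵥ bstar with he
      set w := (H * B) *ᵥ d with hw
      have cross : w ⬝ᵥ Γ⁻¹ *ᵥ e = (1 / (N:ℝ)) * (d ⬝ᵥ bstar) := by
        rw [hw, hpull, he, mulVec_sub, mulVec_mulVec, ← Matrix.mul_assoc,
          dotProduct_sub, ← hstat, hA]
        simp only [add_mulVec, smul_mulVec, one_mulVec, dotProduct_add,
          dotProduct_smul, smul_eq_mul]
        ring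
      have quad : w ⬝ᵥ Γ⁻¹ *ᵥ w = d ⬝ᵥ (Bᵀ * Hᵀ * Γ⁻¹ * H * B) *ᵥ d := by
        rw [hw, hpull, mulVec_mulVec, ← Matrix.mul_assoc]
      have hdA : d ⬝ᵥ A *ᵥ d
          = d ⬝ᵥ (Bᵀ * Hᵀ * Γ⁻¹ * H * B) *ᵥ d + (1 / (N:ℝ)) * (d ⬝ᵥ d) := by
        rw [hA]
        simp [add_mulVec, smul_mulVec, dotProduct_add, dotProduct_smul, smul_eq_mul]
      have harg : y' - H *ᵥ (B *ᵥ (bstar + d)) = e - w := by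
        rw [he, hw, mulVec_mulVec, mulVec_add]; abel
      have harg0 : y' - H *ᵥ (B *ᵥ bstar) = e := by rw [he, mulVec_mulVec]
      rw [hJ, hJ, harg, harg0, hdA]
      have expand : (e - w) ⬝ᵥ Γ⁻¹ *ᵥ (e - w)
          = e ⬝ᵥ Γ⁻¹ *ᵥ e - 2 * (w ⬝ᵥ Γ⁻¹ *ᵥ e) + w ⬝ᵥ Γ⁻¹ *ᵥ w := by
        simp only [mulVec_sub, dotProduct_sub, sub_dotProduct, hsym e w]
        ring
      have expand2 : (bstar + d) ⬝ᵥ (bstar + d)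
          = bstar ⬝ᵥ bstar + 2 * (d ⬝ᵥ bstar) + d ⬝ᵥ d := by
        rw [dotProduct_add, add_dotProduct, add_dotProduct, dotProduct_comm bstar d]
        ring
      rw [expand, expand2, cross, quad]
      field_simp
      ring
    intro b hb
    have hd : b - bstar ≠ 0 := sub_ne_zero_of_ne hb
    have hpos : 0 < (b - bstar) ⬝ᵥ A *ᵥ (b - bstar) := by
      simpa using hApd.dotProduct_mulVec_pos hd
    have := key (b - bstar)
    simp only [add_sub_cancel] at this
    rw [this]; linarith
  · -- Kalman gain identity
    set S := H * C * Hᵀ + Γ with hS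
    have hSpd : S.PosDef := by
      have hHCH : H * C * Hᵀ
          = (H * B) * ((N:ℝ) • (1 : Matrix (Fin N) (Fin N) ℝ)) * (H * B)ᵀ := by
        rw [hC]
        simp [Matrix.mul_smul, Matrix.smul_mul, transpose_mul, Matrix.mul_assoc]
      have hsd : (H * C * Hᵀ).PosSemidef := by
        rw [hHCH]
        have h1 : ((N:ℝ) • (1 : Matrix (Fin N) (Fin N) ℝ)).PosSemidef := by
          rw [smul_one_eq_diagonal]
          exact .diagonal fun _ => by positivity
        have := h1.mul_mul_conjTranspose_same (H * B)
        simpa [conjTranspose_eq_transpose_of_trivial] using this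
      exact Matrix.PosDef.posSemidef_add hsd hΓ
    have hSdet : IsUnit S.det := hSpd.det_pos.ne'.isUnit
    have hcN : (1 / (N:ℝ)) * N = 1 := by field_simp
    have hΓinv : Γ⁻¹ * Γ = 1 := Matrix.nonsing_inv_mul Γ hΓdet
    have hkey : Bᵀ * Hᵀ * Γ⁻¹ * S = (N : ℝ) • (A * (Bᵀ * Hᵀ)) := by
      rw [hS, hA, hC]
      simp only [Matrix.mul_add, Matrix.add_mul, Matrix.smul_mul, Matrix.mul_smul,
        Matrix.one_mul, smul_add, smul_smul, Matrix.mul_assoc, hΓinv, Matrix.mul_one]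
      rw [mul_one_div_cancel hNpos.ne', one_smul]
    have h2 : B * A⁻¹ * (Bᵀ * Hᵀ * Γ⁻¹) * S = C * Hᵀ := by
      rw [Matrix.mul_assoc (B * A⁻¹), hkey, Matrix.mul_smul, ← Matrix.mul_assoc,
        Matrix.mul_assoc B, Matrix.nonsing_inv_mul _ hAdet, Matrix.mul_one, hC]
      simp [Matrix.smul_mul, Matrix.mul_assoc]
    have h3 : B * A⁻¹ * (Bᵀ * Hᵀ * Γ⁻¹) = C * Hᵀ * S⁻¹ := by
      rw [← h2, Matrix.mul_assoc (B * A⁻¹ * (Bᵀ * Hᵀ * Γ⁻¹)),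
        Matrix.mul_nonsing_inv _ hSdet, Matrix.mul_one]
    rw [hbstar, mulVec_mulVec, ← Matrix.mul_assoc, h3]
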